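/- Let k ≥ 2 be an integer, let T ≥ e and N ≥ 1 be reals, and let c_2, …, c_k > 0. Let H = (V, E_2 ∪ … ∪ E_k) be a linear hypergraph with |V| ≤ N such that for every vertex v ∈ V and every i ∈ {2, …, k}, the number d_i(v) of size-i edges containing v satisfies d_i(v) ≤ k·c_i·T^{i−1}·(ln T)^{(k−i)/(k−1)}. Then for all integers 2 ≤ g ≤ h ≤ i ≤ j ≤ k, the number of 4-cycles {E_1, E_2, E_3, E_4} in H with |E_1| = g, |E_2| = h, |E_3| = i, |E_4| = j such that no three of the four edges form a 3-cycle is less than 3·N·k^6·c_g·c_h·c_i·T^{g+h+i−3}·(ln T)^3. -/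

import Mathlib

/-- A `j`-cycle in the hypergraph with edge set `E`: pairwise distinct edges
`e 0, …, e (j-1)` and pairwise distinct vertices `v 0, …, v (j-1)` with
`v i ∈ e i ∩ e (i+1)` (cyclically). -/
def HasCycle {V : Type*} [DecidableEq V] (E : Finset (Finset V)) (j : ℕ) : Prop :=
  ∃ (e : ZMod j → Finset V) (v : ZMod j → V),
    Function.Injective e ∧ Function.Injective v ∧
    (∀ i, e i ∈ E) ∧ (∀ i, v i ∈ e i ∧ v i ∈ e (i + 1))

/-- A hypergraph is linear if it has no 2-cycles. -/
def Linear {V : Type*} [DecidableEq V] (E : Finset (Finset V)) : Prop :=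
  ¬ HasCycle E 2

/-- Three pairwise distinct edges forming a 3-cycle: there are pairwise distinct vertices
`v₁ ∈ e₁ ∩ e₂`, `v₂ ∈ e₂ ∩ e₃`, `v₃ ∈ e₃ ∩ e₁`. -/
def IsCycle3 {V : Type*} [DecidableEq V] (e₁ e₂ e₃ : Finset V) : Prop :=
  e₁ ≠ e₂ ∧ e₁ ≠ e₃ ∧ e₂ ≠ e₃ ∧
  ∃ v₁ v₂ v₃ : V, v₁ ≠ v₂ ∧ v₁ ≠ v₃ ∧ v₂ ≠ v₃ ∧
    v₁ ∈ e₁ ∩ e₂ ∧ v₂ ∈ e₂ ∩ e₃ ∧ v₃ ∈ e₃ ∩ e₁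

/-- Four pairwise distinct edges forming a 4-cycle: there are pairwise distinct vertices
`v₁ ∈ e₁ ∩ e₂`, `v₂ ∈ e₂ ∩ e₃`, `v₃ ∈ e₃ ∩ e₄`, `v₄ ∈ e₄ ∩ e₁`. -/
def IsCycle4 {V : Type*} [DecidableEq V] (e₁ e₂ e₃ e₄ : Finset V) : Prop :=
  e₁ ≠ e₂ ∧ e₁ ≠ e₃ ∧ e₁ ≠ e₄ ∧ e₂ ≠ e₃ ∧ e₂ ≠ e₄ ∧ e₃ ≠ e₄ ∧
  ∃ v₁ v₂ v₃ v₄ : V,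
    v₁ ≠ v₂ ∧ v₁ ≠ v₃ ∧ v₁ ≠ v₄ ∧ v₂ ≠ v₃ ∧ v₂ ≠ v₄ ∧ v₃ ≠ v₄ ∧
    v₁ ∈ e₁ ∩ e₂ ∧ v₂ ∈ e₂ ∩ e₃ ∧ v₃ ∈ e₃ ∩ e₄ ∧ v₄ ∈ e₄ ∩ e₁

noncomputable def pickO {α : Type*} (s : Finset α) : Option α := s.toList.head?

lemma pickO_mem {α : Type*} {s : Finset α} {a : α} (hp : pickO s = some a) : a ∈ s := by
  unfold pickO at hp
  cases hl : s.toList with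
  | nil => rw [hl] at hp; simp at hp
  | cons b l =>
    rw [hl] at hp
    simp at hp
    rw [← Finset.mem_toList, hl, ← hp]
    exact List.mem_cons_self

lemma pickO_some {α : Type*} {s : Finset α} (hs : s.Nonempty) : ∃ a ∈ s, pickO s = some a := by
  cases hl : s.toList with
  | nil => rw [Finset.toList_eq_nil] at hl; subst hl; exact absurd hs (by simp)
  | cons b l =>
    refine ⟨b, ?_, ?_⟩
    · rw [← Finset.mem_toList, hl]; exact List.mem_cons_self
    · unfold pickO; rw [hl]; rfl

lemma pickO_singleton {α : Type*} (a : α) : pickO ({a} : Finset α) = some a := by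
  unfold pickO; rw [Finset.toList_singleton]; rfl

lemma no2 {α : Type*} [DecidableEq α] {E : Finset (Finset α)} (hlin : Linear E)
    {e f : Finset α} (he : e ∈ E) (hf : f ∈ E) (hef : e ≠ f)
    {v w : α} (hv : v ∈ e ∩ f) (hw : w ∈ e ∩ f) : v = w := by
  by_contra hvw
  obtain ⟨hve, hvf⟩ := Finset.mem_inter.mp hv
  obtain ⟨hwe, hwf⟩ := Finset.mem_inter.mp hw
  apply hlin
  have hz : ∀ z : ZMod 2, z = 0 ∨ z = 1 := by decide
  have h10 : (1 : ZMod 2) ≠ 0 := by decide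
  have h01 : (0 : ZMod 2) + 1 = 1 := by decide
  have h11 : (1 : ZMod 2) + 1 = 0 := by decide
  refine ⟨fun z => if z = 0 then e else f, fun z => if z = 0 then v else w, ?_, ?_, ?_, ?_⟩
  · intro a b hab
    rcases hz a with rfl | rfl <;> rcases hz b with rfl | rfl <;>
      simp [h10] at hab ⊢ <;> exact absurd hab (by tauto)
  · intro a b hab
    rcases hz a with rfl | rfl <;> rcases hz b with rfl | rfl <;>
      simp [h10] at hab ⊢ <;> exact absurd hab (by tauto)
  · intro z; rcases hz z with rfl | rfl <;> simp [h10, he, hf]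
  · intro z
    rcases hz z with rfl | rfl
    · rw [h01]; simp [h10, hve, hwf, hvf]
    · rw [h11]; simp [h10, hwf, hwe]

lemma inter_singleton {α : Type*} [DecidableEq α] {E : Finset (Finset α)} (hlin : Linear E)
    {e f : Finset α} (he : e ∈ E) (hf : f ∈ E) (hef : e ≠ f)
    {v : α} (hv : v ∈ e ∩ f) : e ∩ f = {v} :=
  Finset.eq_singleton_iff_unique_mem.mpr ⟨hv, fun _ hx => no2 hlin he hf hef hx hv⟩

lemma keyCount {β γ : Type*} [DecidableEq γ] (s : Finset β) (t : Finset γ) (f : β → γ)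
    (hmap : ∀ b ∈ s, f b ∈ t) (B M : ℝ) (htB : (t.card : ℝ) ≤ B) (hM : 0 ≤ M)
    (hfib : ∀ c ∈ t, (((s.filter fun b => f b = c)).card : ℝ) ≤ M) :
    (s.card : ℝ) ≤ B * M := by
  classical
  have h1 : s.card = ∑ c ∈ t, (s.filter fun b => f b = c).card :=
    Finset.card_eq_sum_card_fiberwise hmap
  calc (s.card : ℝ) = ∑ c ∈ t, ((s.filter fun b => f b = c).card : ℝ) := by
        rw [h1]; push_cast; ring
    _ ≤ ∑ _c ∈ t, M := Finset.sum_le_sum hfib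
    _ = (t.card : ℝ) * M := by rw [Finset.sum_const, nsmul_eq_mul]
    _ ≤ B * M := mul_le_mul_of_nonneg_right htB hM

noncomputable def Dd (k x : ℕ) (c : ℕ → ℝ) (T : ℝ) : ℝ :=
  (k : ℝ) * c x * T ^ (x - 1) * Real.log T ^ (((k : ℝ) - x) / ((k : ℝ) - 1))


set_option maxHeartbeats 2000000 in
/-- Counting 4-cycles (no three edges of which form a 3-cycle) with prescribed edge
sizes in a linear hypergraph with bounded degrees. -/
theorem stmt15 {α : Type*} [DecidableEq α] (k : ℕ) (hk : 2 ≤ k) (T N : ℝ)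
    (hT : Real.exp 1 ≤ T) (hN : 1 ≤ N)
    (c : ℕ → ℝ) (hc : ∀ i : ℕ, 2 ≤ i → i ≤ k → 0 < c i)
    (V : Finset α) (hVN : (V.card : ℝ) ≤ N)
    (E : Finset (Finset α)) (hEV : ∀ e ∈ E, e ⊆ V)
    (hE : ∀ e ∈ E, 2 ≤ e.card ∧ e.card ≤ k)
    (hlin : Linear E)
    (hdeg : ∀ v ∈ V, ∀ i : ℕ, 2 ≤ i → i ≤ k →
      ((E.filter fun e => e.card = i ∧ v ∈ e).card : ℝ) ≤
        (k : ℝ) * c i * T ^ (i - 1) * Real.log T ^ (((k : ℝ) - i) / ((k : ℝ) - 1)))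
    (g h i j : ℕ) (hg : 2 ≤ g) (hgh : g ≤ h) (hhi : h ≤ i) (hij : i ≤ j) (hjk : j ≤ k) :
    (Set.ncard {s : Finset (Finset α) | ∃ e₁ e₂ e₃ e₄ : Finset α,
        s = {e₁, e₂, e₃, e₄} ∧ e₁ ∈ E ∧ e₂ ∈ E ∧ e₃ ∈ E ∧ e₄ ∈ E ∧
        IsCycle4 e₁ e₂ e₃ e₄ ∧
        e₁.card = g ∧ e₂.card = h ∧ e₃.card = i ∧ e₄.card = j ∧
        (∀ f₁ ∈ ({e₁, e₂, e₃, e₄} : Finset (Finset α)),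
          ∀ f₂ ∈ ({e₁, e₂, e₃, e₄} : Finset (Finset α)),
          ∀ f₃ ∈ ({e₁, e₂, e₃, e₄} : Finset (Finset α)),
            ¬ IsCycle3 f₁ f₂ f₃)} : ℝ) <
      3 * N * (k : ℝ) ^ 6 * c g * c h * c i * T ^ (g + h + i - 3) * Real.log T ^ 3 := by
  classical
  have hgk : g ≤ k := le_trans hgh (le_trans hhi (le_trans hij hjk))
  have hhk : h ≤ k := le_trans hhi (le_trans hij hjk)
  have hik : i ≤ k := le_trans hij hjk
  have hh2 : 2 ≤ h := le_trans hg hgh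
  have hi2 : 2 ≤ i := le_trans hh2 hhi
  have hcg := hc g hg hgk
  have hch := hc h hh2 hhk
  have hci := hc i hi2 hik
  have hT0 : (0:ℝ) < T := lt_of_lt_of_le (Real.exp_pos 1) hT
  have hL1 : (1:ℝ) ≤ Real.log T := (Real.le_log_iff_exp_le hT0).mpr hT
  have hL0 : (0:ℝ) < Real.log T := lt_of_lt_of_le one_pos hL1
  have hk2 : (2:ℝ) ≤ (k:ℝ) := by exact_mod_cast hk
  have hk0 : (0:ℝ) < (k:ℝ) := by linarith
  have hDg : 0 < Dd k g c T :=
    mul_pos (mul_pos (mul_pos hk0 hcg) (pow_pos hT0 _)) (Real.rpow_pos_of_pos hL0 _)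
  have hDh : 0 < Dd k h c T :=
    mul_pos (mul_pos (mul_pos hk0 hch) (pow_pos hT0 _)) (Real.rpow_pos_of_pos hL0 _)
  have hDi : 0 < Dd k i c T :=
    mul_pos (mul_pos (mul_pos hk0 hci) (pow_pos hT0 _)) (Real.rpow_pos_of_pos hL0 _)
  have hM7 : (0:ℝ) ≤ 1 := zero_le_one
  have hM6 : (0:ℝ) ≤ (k:ℝ) * 1 := by positivity
  have hM5 : (0:ℝ) ≤ (k:ℝ) * ((k:ℝ) * 1) := by positivity
  have hM4 : (0:ℝ) ≤ Dd k i c T * ((k:ℝ) * ((k:ℝ) * 1)) := mul_nonneg hDi.le hM5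
  have hM3 : (0:ℝ) ≤ (k:ℝ) * (Dd k i c T * ((k:ℝ) * ((k:ℝ) * 1))) := mul_nonneg hk0.le hM4
  have hM2 : (0:ℝ) ≤ Dd k h c T * ((k:ℝ) * (Dd k i c T * ((k:ℝ) * ((k:ℝ) * 1)))) :=
    mul_nonneg hDh.le hM3
  have hM1 : (0:ℝ) ≤ Dd k g c T * (Dd k h c T * ((k:ℝ) * (Dd k i c T * ((k:ℝ) * ((k:ℝ) * 1))))) :=
    mul_nonneg hDg.le hM2
  set A : Finset (Finset α × Finset α × Finset α × Finset α) :=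
    (E ×ˢ E ×ˢ E ×ˢ E).filter (fun t => IsCycle4 t.1 t.2.1 t.2.2.1 t.2.2.2 ∧
      t.1.card = g ∧ t.2.1.card = h ∧ t.2.2.1.card = i ∧ t.2.2.2.card = j) with hAdef
  have hAE : ∀ t ∈ A, t.1 ∈ E ∧ t.2.1 ∈ E ∧ t.2.2.1 ∈ E ∧ t.2.2.2 ∈ E := by
    intro t ht
    rw [hAdef] at ht
    have h' := (Finset.mem_filter.mp ht).1
    simp only [Finset.mem_product] at h'
    exact ⟨h'.1, h'.2.1, h'.2.2.1, h'.2.2.2⟩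
  have hAC : ∀ t ∈ A, IsCycle4 t.1 t.2.1 t.2.2.1 t.2.2.2 ∧
      t.1.card = g ∧ t.2.1.card = h ∧ t.2.2.1.card = i ∧ t.2.2.2.card = j := by
    intro t ht
    rw [hAdef] at ht
    exact (Finset.mem_filter.mp ht).2
  -- Step 2 : counting bound on A
  have hA2 : (A.card : ℝ) ≤
      N * (Dd k g c T * (Dd k h c T * ((k:ℝ) * (Dd k i c T * ((k:ℝ) * ((k:ℝ) * 1)))))) := by
    refine keyCount A (V.image some) (fun t => pickO (t.1 ∩ t.2.1)) ?_ N _ ?_ hM1 ?_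
    · intro t ht
      obtain ⟨he₁, -, -, -⟩ := hAE t ht
      obtain ⟨-,-,-,-,-,-, w₁,w₂,w₃,w₄, -,-,-,-,-,-, hw₁, -, -, -⟩ := (hAC t ht).1
      obtain ⟨a, ha, hpa⟩ := pickO_some ⟨w₁, hw₁⟩
      rw [hpa]
      exact Finset.mem_image.mpr ⟨a, hEV _ he₁ (Finset.mem_inter.mp ha).1, rfl⟩
    · calc ((V.image some).card : ℝ) ≤ (V.card : ℝ) := by exact_mod_cast Finset.card_image_le
        _ ≤ N := hVN
    · intro ov hov
      obtain ⟨v₁, hv₁V, rfl⟩ := Finset.mem_image.mp hov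
      refine keyCount _ (E.filter fun e => e.card = g ∧ v₁ ∈ e) (fun t => t.1) ?_
        (Dd k g c T) _ ?_ hM2 ?_
      · intro t ht
        obtain ⟨htA, hp₁⟩ := Finset.mem_filter.mp ht
        exact Finset.mem_filter.mpr ⟨(hAE t htA).1,
          (hAC t htA).2.1, (Finset.mem_inter.mp (pickO_mem hp₁)).1⟩
      · exact hdeg v₁ hv₁V g hg hgk
      · intro ε₁ hε₁
        have hε₁card : ε₁.card = g := (Finset.mem_filter.mp hε₁).2.1
        refine keyCount _ (E.filter fun e => e.card = h ∧ v₁ ∈ e) (fun t => t.2.1) ?_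
          (Dd k h c T) _ ?_ hM3 ?_
        · intro t ht
          simp only [Finset.mem_filter] at ht
          obtain ⟨⟨htA, hp₁⟩, hp₂⟩ := ht
          exact Finset.mem_filter.mpr ⟨(hAE t htA).2.1,
            (hAC t htA).2.2.1, (Finset.mem_inter.mp (pickO_mem hp₁)).2⟩
        · exact hdeg v₁ hv₁V h hh2 hhk
        · intro ε₂ hε₂
          have hε₂E : ε₂ ∈ E := (Finset.mem_filter.mp hε₂).1
          have hε₂card : ε₂.card = h := (Finset.mem_filter.mp hε₂).2.1
          refine keyCount _ (ε₂.image some) (fun t => pickO (t.2.1 ∩ t.2.2.1)) ?_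
            (k:ℝ) _ ?_ hM4 ?_
          · intro t ht
            simp only [Finset.mem_filter] at ht
            obtain ⟨⟨⟨htA, hp₁⟩, hp₂⟩, hp₃⟩ := ht
            obtain ⟨-,-,-,-,-,-, w₁,w₂,w₃,w₄, -,-,-,-,-,-, -, hw₂, -, -⟩ := (hAC t htA).1
            obtain ⟨a, ha, hpa⟩ := pickO_some ⟨w₂, hw₂⟩
            rw [hpa]
            refine Finset.mem_image.mpr ⟨a, ?_, rfl⟩
            rw [← hp₃]
            exact (Finset.mem_inter.mp ha).1
          · calc ((ε₂.image some).card : ℝ) ≤ (ε₂.card : ℝ) := by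
                  exact_mod_cast Finset.card_image_le
              _ ≤ (k:ℝ) := by rw [hε₂card]; exact_mod_cast hhk
          · intro ov₂ hov₂
            obtain ⟨v₂, hv₂ε₂, rfl⟩ := Finset.mem_image.mp hov₂
            have hv₂V : v₂ ∈ V := hEV ε₂ hε₂E hv₂ε₂
            refine keyCount _ (E.filter fun e => e.card = i ∧ v₂ ∈ e) (fun t => t.2.2.1) ?_
              (Dd k i c T) _ ?_ hM5 ?_
            · intro t ht
              simp only [Finset.mem_filter] at ht
              obtain ⟨⟨⟨⟨htA, hp₁⟩, hp₂⟩, hp₃⟩, hp₄⟩ := ht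
              exact Finset.mem_filter.mpr ⟨(hAE t htA).2.2.1,
                (hAC t htA).2.2.2.1, (Finset.mem_inter.mp (pickO_mem hp₄)).2⟩
            · exact hdeg v₂ hv₂V i hi2 hik
            · intro ε₃ hε₃
              have hε₃card : ε₃.card = i := (Finset.mem_filter.mp hε₃).2.1
              refine keyCount _ (ε₃.image some) (fun t => pickO (t.2.2.1 ∩ t.2.2.2)) ?_
                (k:ℝ) _ ?_ hM6 ?_
              · intro t ht
                simp only [Finset.mem_filter] at ht
                obtain ⟨⟨⟨⟨⟨htA, hp₁⟩, hp₂⟩, hp₃⟩, hp₄⟩, hp₅⟩ := ht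
                obtain ⟨-,-,-,-,-,-, w₁,w₂,w₃,w₄, -,-,-,-,-,-, -, -, hw₃, -⟩ := (hAC t htA).1
                obtain ⟨a, ha, hpa⟩ := pickO_some ⟨w₃, hw₃⟩
                rw [hpa]
                refine Finset.mem_image.mpr ⟨a, ?_, rfl⟩
                rw [← hp₅]
                exact (Finset.mem_inter.mp ha).1
              · calc ((ε₃.image some).card : ℝ) ≤ (ε₃.card : ℝ) := by
                      exact_mod_cast Finset.card_image_le
                  _ ≤ (k:ℝ) := by rw [hε₃card]; exact_mod_cast hik
              · intro ox hox
                obtain ⟨x, hxε₃, rfl⟩ := Finset.mem_image.mp hox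
                refine keyCount _ (ε₁.image some) (fun t => pickO (t.2.2.2 ∩ t.1)) ?_
                  (k:ℝ) _ ?_ hM7 ?_
                · intro t ht
                  simp only [Finset.mem_filter] at ht
                  obtain ⟨⟨⟨⟨⟨⟨htA, hp₁⟩, hp₂⟩, hp₃⟩, hp₄⟩, hp₅⟩, hp₆⟩ := ht
                  obtain ⟨-,-,-,-,-,-, w₁,w₂,w₃,w₄, -,-,-,-,-,-, -, -, -, hw₄⟩ := (hAC t htA).1
                  obtain ⟨a, ha, hpa⟩ := pickO_some ⟨w₄, hw₄⟩
                  rw [hpa]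
                  refine Finset.mem_image.mpr ⟨a, ?_, rfl⟩
                  rw [← hp₂]
                  exact (Finset.mem_inter.mp ha).2
                · calc ((ε₁.image some).card : ℝ) ≤ (ε₁.card : ℝ) := by
                        exact_mod_cast Finset.card_image_le
                    _ ≤ (k:ℝ) := by rw [hε₁card]; exact_mod_cast hgk
                · intro oy hoy
                  obtain ⟨y, hyε₁, rfl⟩ := Finset.mem_image.mp hoy
                  rw [show (1:ℝ) = ((1:ℕ):ℝ) from by norm_num, Nat.cast_le]
                  refine Finset.card_le_one.mpr ?_
                  intro t ht t' ht'
                  simp only [Finset.mem_filter] at ht ht'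
                  obtain ⟨⟨⟨⟨⟨⟨⟨htA, q₁⟩, q₂⟩, q₃⟩, q₄⟩, q₅⟩, q₆⟩, q₇⟩ := ht
                  obtain ⟨⟨⟨⟨⟨⟨⟨htA', q₁'⟩, q₂'⟩, q₃'⟩, q₄'⟩, q₅'⟩, q₆'⟩, q₇'⟩ := ht'
                  obtain ⟨he₁E, he₂E, he₃E, he₄E⟩ := hAE t htA
                  obtain ⟨he₁E', he₂E', he₃E', he₄E'⟩ := hAE t' htA'
                  obtain ⟨-,-,h14,-,-,h34, w₁,w₂,w₃,w₄, -,-,-,-,-,hw34, hw₁,hw₂,hw₃,hw₄⟩ :=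
                    (hAC t htA).1
                  obtain ⟨-,-,h14',-,-,h34', w₁',w₂',w₃',w₄', -,-,-,-,-,hw34', hw₁',hw₂',hw₃',hw₄'⟩ :=
                    (hAC t' htA').1
                  have hs34 : t.2.2.1 ∩ t.2.2.2 = {w₃} :=
                    inter_singleton hlin he₃E he₄E h34 hw₃
                  have hx : x = w₃ := by
                    have hq := q₆; rw [hs34, pickO_singleton] at hq
                    exact (Option.some.inj hq).symm
                  have hs41 : t.2.2.2 ∩ t.1 = {w₄} :=
                    inter_singleton hlin he₄E he₁E (Ne.symm h14) hw₄
                  have hy : y = w₄ := by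
                    have hq := q₇; rw [hs41, pickO_singleton] at hq
                    exact (Option.some.inj hq).symm
                  have hs34' : t'.2.2.1 ∩ t'.2.2.2 = {w₃'} :=
                    inter_singleton hlin he₃E' he₄E' h34' hw₃'
                  have hx' : x = w₃' := by
                    have hq := q₆'; rw [hs34', pickO_singleton] at hq
                    exact (Option.some.inj hq).symm
                  have hs41' : t'.2.2.2 ∩ t'.1 = {w₄'} :=
                    inter_singleton hlin he₄E' he₁E' (Ne.symm h14') hw₄'
                  have hy' : y = w₄' := by
                    have hq := q₇'; rw [hs41', pickO_singleton] at hq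
                    exact (Option.some.inj hq).symm
                  have hxy : x ≠ y := by rw [hx, hy]; exact hw34
                  have hx4 : x ∈ t.2.2.2 := hx ▸ (Finset.mem_inter.mp hw₃).2
                  have hy4 : y ∈ t.2.2.2 := hy ▸ (Finset.mem_inter.mp hw₄).1
                  have hx4' : x ∈ t'.2.2.2 := hx' ▸ (Finset.mem_inter.mp hw₃').2
                  have hy4' : y ∈ t'.2.2.2 := hy' ▸ (Finset.mem_inter.mp hw₄').1
                  have h44 : t.2.2.2 = t'.2.2.2 := by
                    by_contra hne
                    exact hxy (no2 hlin he₄E he₄E' hne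
                      (Finset.mem_inter.mpr ⟨hx4, hx4'⟩) (Finset.mem_inter.mpr ⟨hy4, hy4'⟩))
                  have h11' : t.1 = t'.1 := q₂.trans q₂'.symm
                  have h22' : t.2.1 = t'.2.1 := q₃.trans q₃'.symm
                  have h33' : t.2.2.1 = t'.2.2.1 := q₅.trans q₅'.symm
                  exact Prod.ext h11' (Prod.ext h22' (Prod.ext h33' h44))
  -- Step 1 : the set injects into A
  have hstep1 : ∀ (S : Set (Finset (Finset α))),
      S ⊆ ↑(A.image fun t => ({t.1, t.2.1, t.2.2.1, t.2.2.2} : Finset (Finset α))) →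
      ((S.ncard : ℝ) ≤ (A.card : ℝ)) := by
    intro S hSsub
    have h1 : S.ncard ≤ (A.image fun t => ({t.1, t.2.1, t.2.2.1, t.2.2.2} : Finset (Finset α))).card := by
      calc S.ncard ≤ (↑(A.image fun t => ({t.1, t.2.1, t.2.2.1, t.2.2.2} : Finset (Finset α))) :
              Set (Finset (Finset α))).ncard :=
            Set.ncard_le_ncard hSsub (Finset.finite_toSet _)
        _ = _ := Set.ncard_coe_finset _
    exact_mod_cast le_trans h1 Finset.card_image_le
  -- final arithmetic
  have hfinal : N * (Dd k g c T * (Dd k h c T * ((k:ℝ) * (Dd k i c T * ((k:ℝ) * ((k:ℝ) * 1)))))) <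
      3 * N * (k : ℝ) ^ 6 * c g * c h * c i * T ^ (g + h + i - 3) * Real.log T ^ 3 := by
    have hN0 : (0:ℝ) < N := lt_of_lt_of_le one_pos hN
    have hTpow : T ^ (g-1) * T ^ (h-1) * T ^ (i-1) = T ^ (g+h+i-3) := by
      rw [← pow_add, ← pow_add]; congr 1; omega
    have hk1 : (0:ℝ) < (k:ℝ) - 1 := by linarith
    have hg2 : (2:ℝ) ≤ (g:ℝ) := by exact_mod_cast hg
    have hh2' : (2:ℝ) ≤ (h:ℝ) := by exact_mod_cast hh2
    have hi2' : (2:ℝ) ≤ (i:ℝ) := by exact_mod_cast hi2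
    have hsum : ((k:ℝ)-g)/((k:ℝ)-1) + ((k:ℝ)-h)/((k:ℝ)-1) + ((k:ℝ)-i)/((k:ℝ)-1) ≤ 3 := by
      rw [← add_div, ← add_div, div_le_iff₀ hk1]
      linarith
    have hLs : Real.log T ^ (((k:ℝ)-g)/((k:ℝ)-1)) * Real.log T ^ (((k:ℝ)-h)/((k:ℝ)-1)) *
        Real.log T ^ (((k:ℝ)-i)/((k:ℝ)-1)) ≤ Real.log T ^ (3:ℕ) := by
      rw [← Real.rpow_add hL0, ← Real.rpow_add hL0]
      calc Real.log T ^ (((k:ℝ)-g)/((k:ℝ)-1) + ((k:ℝ)-h)/((k:ℝ)-1) + ((k:ℝ)-i)/((k:ℝ)-1)) ≤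
            Real.log T ^ ((3:ℕ):ℝ) :=
            Real.rpow_le_rpow_of_exponent_le hL1 (by push_cast; linarith)
        _ = Real.log T ^ (3:ℕ) := Real.rpow_natCast _ 3
    have hre : N * (Dd k g c T * (Dd k h c T * ((k:ℝ) * (Dd k i c T * ((k:ℝ) * ((k:ℝ) * 1)))))) =
        (N * (k:ℝ)^6 * c g * c h * c i * (T ^ (g-1) * T ^ (h-1) * T ^ (i-1))) *
        (Real.log T ^ (((k:ℝ)-g)/((k:ℝ)-1)) * Real.log T ^ (((k:ℝ)-h)/((k:ℝ)-1)) *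
          Real.log T ^ (((k:ℝ)-i)/((k:ℝ)-1))) := by
      unfold Dd; ring
    rw [hre, hTpow]
    have hP : 0 < N * (k:ℝ)^6 * c g * c h * c i * T ^ (g+h+i-3) := by
      apply mul_pos (mul_pos (mul_pos (mul_pos (mul_pos hN0 (pow_pos hk0 6)) hcg) hch) hci)
        (pow_pos hT0 _)
    have hPL : 0 < (N * (k:ℝ)^6 * c g * c h * c i * T ^ (g+h+i-3)) * Real.log T ^ (3:ℕ) :=
      mul_pos hP (pow_pos hL0 3)
    calc (N * (k:ℝ)^6 * c g * c h * c i * T ^ (g+h+i-3)) *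
          (Real.log T ^ (((k:ℝ)-g)/((k:ℝ)-1)) * Real.log T ^ (((k:ℝ)-h)/((k:ℝ)-1)) *
            Real.log T ^ (((k:ℝ)-i)/((k:ℝ)-1)))
        ≤ (N * (k:ℝ)^6 * c g * c h * c i * T ^ (g+h+i-3)) * Real.log T ^ (3:ℕ) :=
          mul_le_mul_of_nonneg_left hLs hP.le
      _ < 3 * N * (k : ℝ) ^ 6 * c g * c h * c i * T ^ (g + h + i - 3) * Real.log T ^ 3 := by
          nlinarith [hPL]
  refine lt_of_le_of_lt (le_trans (hstep1 _ ?_) hA2) hfinal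
  rintro s ⟨e₁, e₂, e₃, e₄, rfl, he₁, he₂, he₃, he₄, hcyc, hcard1, hcard2, hcard3, hcard4, -⟩
  refine Finset.mem_coe.mpr (Finset.mem_image.mpr ⟨(e₁, e₂, e₃, e₄), ?_, rfl⟩)
  rw [hAdef]
  exact Finset.mem_filter.mpr ⟨by simp [Finset.mem_product, he₁, he₂, he₃, he₄],
    hcyc, hcard1, hcard2, hcard3, hcard4⟩
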